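/- Multiplicative weights regret bound: let A be a nonempty finite set of N actions, T ≥ 1, and for each round t ∈ {1,…,T} let m_t : A → [0,1] be a cost vector. Fix η with 0 < η ≤ 1/2. Define weights by w_1(a) = 1 and w_{t+1}(a) = w_t(a)·(1−η)^{m_t(a)}, and probability distributions p_t(a) = w_t(a) / Σ_{b∈A} w_t(b). Then for every action a ∈ A, Σ_{t=1}^{T} Σ_{b∈A} p_t(b) m_t(b) ≤ (1+η) Σ_{t=1}^{T} m_t(a) + (ln N)/η. -/

import Mathlib

open Finset

lemma mw_neg_log_bound {η : ℝ} (hη0 : 0 < η) (hη1 : η ≤ 1 / 2) :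
    -(η + η ^ 2) ≤ Real.log (1 - η) := by
  have h1 : (0:ℝ) < 1 - η := by linarith
  have habs : |η| < 1 := by rw [abs_of_pos hη0]; linarith
  have h := Real.abs_log_sub_add_sum_range_le habs 4
  rw [abs_of_pos hη0] at h
  have hsum : (∑ i ∈ range 4, η ^ (i + 1) / (i + 1))
      = η + η ^ 2 / 2 + η ^ 3 / 3 + η ^ 4 / 4 := by
    simp [Finset.sum_range_succ]
    ring
  rw [hsum] at h
  have h2 := abs_le.mp h |>.1
  have hu : η ^ 5 / (1 - η) ≤ 2 * η ^ 5 := by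
    rw [div_le_iff₀ h1]
    nlinarith [pow_pos hη0 5]
  nlinarith [pow_pos hη0 2, pow_pos hη0 3, pow_pos hη0 4, pow_pos hη0 5]

lemma mw_rpow_le {η x : ℝ} (hη0 : 0 < η) (hη1 : η ≤ 1 / 2)
    (hx0 : 0 ≤ x) (hx1 : x ≤ 1) : (1 - η) ^ x ≤ 1 - η * x := by
  have h1 : (0:ℝ) < 1 - η := by linarith
  have h := convexOn_exp.2 (Set.mem_univ (Real.log (1 - η))) (Set.mem_univ (0:ℝ))
      hx0 (by linarith : (0:ℝ) ≤ 1 - x) (by ring)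
  simp only [smul_eq_mul, mul_zero, add_zero, Real.exp_zero, Real.exp_log h1] at h
  rw [Real.rpow_def_of_pos h1]
  calc Real.exp (Real.log (1 - η) * x) = Real.exp (x * Real.log (1 - η)) := by ring_nf
    _ ≤ x * (1 - η) + (1 - x) * 1 := h
    _ = 1 - η * x := by ring

theorem multiplicative_weights_regret_bound
    (A : Type) [Fintype A] [Nonempty A]
    (N : ℕ) (hN : N = Fintype.card A)
    (T : ℕ) (hT : 1 ≤ T)
    (m : ℕ → A → ℝ)
    (hm : ∀ t ∈ Finset.range T, ∀ a, 0 ≤ m t a ∧ m t a ≤ 1)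
    (η : ℝ) (hη0 : 0 < η) (hη1 : η ≤ 1 / 2)
    (w : ℕ → A → ℝ)
    (hw0 : ∀ a, w 0 a = 1)
    (hwrec : ∀ t a, w (t + 1) a = w t a * (1 - η) ^ (m t a))
    (p : ℕ → A → ℝ)
    (hp : ∀ t a, p t a = w t a / ∑ b, w t b) :
    ∀ a : A,
      (∑ t ∈ Finset.range T, ∑ b, p t b * m t b) ≤
        (1 + η) * (∑ t ∈ Finset.range T, m t a) + Real.log N / η := by
  intro a
  have h1 : (0:ℝ) < 1 - η := by linarith
  -- positivity of weights
  have hwpos : ∀ t b, 0 < w t b := by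
    intro t
    induction t with
    | zero => intro b; rw [hw0]; norm_num
    | succ t ih =>
      intro b
      rw [hwrec]
      exact mul_pos (ih b) (Real.rpow_pos_of_pos h1 _)
  set Φ : ℕ → ℝ := fun t => ∑ b, w t b with hΦ
  have hΦpos : ∀ t, 0 < Φ t := fun t =>
    Finset.sum_pos (fun b _ => hwpos t b) Finset.univ_nonempty
  set C : ℕ → ℝ := fun t => ∑ b, p t b * m t b with hC
  have hCeq : ∀ t, Φ t * C t = ∑ b, w t b * m t b := by
    intro t
    have hC2 : C t = (∑ b, w t b * m t b) / Φ t := by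
      simp only [hC, hp, div_mul_eq_mul_div, ← Finset.sum_div]
      rfl
    rw [hC2, mul_comm]
    exact div_mul_cancel₀ _ (hΦpos t).ne'
  have hNpos : (0:ℝ) < N := by
    rw [hN]; exact_mod_cast Fintype.card_pos
  -- one-step bound
  have hstep : ∀ t < T, Φ (t + 1) ≤ Φ t * Real.exp (-(η * C t)) := by
    intro t ht
    have hs1 : Φ (t + 1) ≤ ∑ b, w t b * (1 - η * m t b) := by
      apply Finset.sum_le_sum
      intro b _
      rw [hwrec]
      exact mul_le_mul_of_nonneg_left
        (mw_rpow_le hη0 hη1 (hm t (Finset.mem_range.mpr ht) b).1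
          (hm t (Finset.mem_range.mpr ht) b).2) (hwpos t b).le
    have hs2 : (∑ b, w t b * (1 - η * m t b)) = Φ t * (1 - η * C t) := by
      calc (∑ b, w t b * (1 - η * m t b))
          = Φ t - η * (∑ b, w t b * m t b) := by
            rw [Finset.mul_sum, ← Finset.sum_sub_distrib]
            apply Finset.sum_congr rfl; intro b _; ring
        _ = Φ t - η * (Φ t * C t) := by rw [hCeq t]
        _ = Φ t * (1 - η * C t) := by ring
    have hs3 : Φ t * (1 - η * C t) ≤ Φ t * Real.exp (-(η * C t)) := by
      apply mul_le_mul_of_nonneg_left _ (hΦpos t).le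
      have := Real.add_one_le_exp (-(η * C t))
      linarith
    linarith
  -- potential bound by induction
  have hpot : ∀ t ≤ T, Φ t ≤ N * Real.exp (-(η * ∑ s ∈ Finset.range t, C s)) := by
    intro t
    induction t with
    | zero =>
      intro _
      simp [hΦ, hw0, hN]
    | succ t ih =>
      intro ht
      have ht' : t < T := ht
      have h2 := hstep t ht'
      have h3 := ih (le_of_lt ht')
      calc Φ (t + 1) ≤ Φ t * Real.exp (-(η * C t)) := h2
        _ ≤ N * Real.exp (-(η * ∑ s ∈ Finset.range t, C s)) * Real.exp (-(η * C t)) :=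
            mul_le_mul_of_nonneg_right h3 (Real.exp_pos _).le
        _ = N * Real.exp (-(η * ∑ s ∈ Finset.range (t + 1), C s)) := by
            rw [mul_assoc, ← Real.exp_add, Finset.sum_range_succ]
            ring_nf
  -- weight of action a
  have hwa : ∀ t, w t a = (1 - η) ^ (∑ s ∈ Finset.range t, m s a) := by
    intro t
    induction t with
    | zero => simp [hw0]
    | succ t ih =>
      rw [hwrec, ih, Finset.sum_range_succ, Real.rpow_add h1]
  set S : ℝ := ∑ t ∈ Finset.range T, m t a with hS
  have hS0 : 0 ≤ S := Finset.sum_nonneg fun t ht => (hm t ht a).1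
  have hwa' : Real.exp (S * Real.log (1 - η)) = w T a := by
    rw [hwa T, Real.rpow_def_of_pos h1, mul_comm]
  have hle : w T a ≤ Φ T := Finset.single_le_sum (fun b _ => (hwpos T b).le)
    (Finset.mem_univ a)
  have hchain : Real.exp (S * Real.log (1 - η)) ≤
      N * Real.exp (-(η * ∑ s ∈ Finset.range T, C s)) := by
    rw [hwa']
    exact hle.trans (hpot T le_rfl)
  have hlog := Real.log_le_log (Real.exp_pos _) hchain
  rw [Real.log_exp, Real.log_mul (ne_of_gt hNpos) (Real.exp_ne_zero _),
    Real.log_exp] at hlog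
  -- combine
  have hln := mw_neg_log_bound hη0 hη1
  have hSlog : -(S * Real.log (1 - η)) ≤ S * (η + η ^ 2) := by
    nlinarith
  have hmain : η * (∑ s ∈ Finset.range T, C s) ≤ Real.log N + S * (η + η ^ 2) := by
    linarith
  have hdiv : η * (Real.log N / η) = Real.log N := by field_simp
  have hgoal : η * (∑ t ∈ Finset.range T, ∑ b, p t b * m t b) ≤
      η * ((1 + η) * S + Real.log N / η) := by
    have heq : (∑ t ∈ Finset.range T, ∑ b, p t b * m t b)
        = ∑ s ∈ Finset.range T, C s := rfl
    rw [heq, mul_add, hdiv]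
    nlinarith
  exact (mul_le_mul_iff_right₀ hη0).mp hgoal
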